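/- For all t ≥ 0, f(t)/2 ≤ γ t f'(t) ≤ γ f(t). -/

import Mathlib

theorem stmt5 (p γ : ℝ) (hp : 1 < p) (hγ : 1/2 < γ)
    (f f' : ℝ → ℝ)
    (hodd : ∀ t, f (-t) = - f t) (hf0 : f 0 = 0)
    (hderiv : ∀ t, HasDerivAt f (f' t) t)
    (hf' : ∀ t, f' t = (1 + (2*γ)^(p-1) * |f t| ^ (p*(2*γ-1))) ^ (-(1/p))) :
    ∀ t : ℝ, 0 ≤ t → f t / 2 ≤ γ * t * f' t ∧ γ * t * f' t ≤ γ * f t := by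
  have hγ0 : (0:ℝ) < γ := by linarith
  have hp0 : (0:ℝ) < p := by linarith
  have hq0 : (0:ℝ) ≤ p * (2*γ - 1) := by nlinarith
  set c : ℝ := (2*γ)^(p-1) with hcdef
  have hc0 : 0 < c := Real.rpow_pos_of_pos (by linarith) _
  have hbase : ∀ t, (0:ℝ) < 1 + c * |f t| ^ (p*(2*γ-1)) := by
    intro t
    have h1 : (0:ℝ) ≤ |f t| ^ (p*(2*γ-1)) := Real.rpow_nonneg (abs_nonneg _) _
    nlinarith
  have hf'pos : ∀ t, 0 < f' t := by
    intro t; rw [hf' t]; exact Real.rpow_pos_of_pos (hbase t) _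
  have hmono : StrictMono f := strictMono_of_hasDerivAt_pos hderiv hf'pos
  have hfnn : ∀ t, 0 ≤ t → 0 ≤ f t := by
    intro t ht
    rcases ht.lt_or_eq with h | h
    · exact le_of_lt (by simpa [hf0] using hmono h)
    · simp [← h, hf0]
  -- f' is antitone on [0, ∞)
  have hanti : ∀ s t : ℝ, 0 ≤ s → s ≤ t → f' t ≤ f' s := by
    intro s t hs hst
    rw [hf' s, hf' t]
    have habs : |f s| ≤ |f t| := by
      rw [abs_of_nonneg (hfnn s hs), abs_of_nonneg (hfnn t (hs.trans hst))]
      exact hmono.monotone hst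
    have h1 : |f s| ^ (p*(2*γ-1)) ≤ |f t| ^ (p*(2*γ-1)) :=
      Real.rpow_le_rpow (abs_nonneg _) habs hq0
    exact Real.rpow_le_rpow_of_nonpos (hbase s)
      (by nlinarith) (neg_nonpos.mpr (by positivity))
  -- rewrite a^(2γ-1) * (1+cA)^(-1/p) as (A/(1+cA))^(1/p)
  have form : ∀ a : ℝ, 0 ≤ a →
      a ^ (2*γ-1) * (1 + c * a ^ (p*(2*γ-1))) ^ (-(1/p))
        = (a ^ (p*(2*γ-1)) / (1 + c * a ^ (p*(2*γ-1)))) ^ (1/p) := by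
    intro a ha
    have hA : (0:ℝ) ≤ a ^ (p*(2*γ-1)) := Real.rpow_nonneg ha _
    have hB : (0:ℝ) < 1 + c * a ^ (p*(2*γ-1)) := by nlinarith
    have hexp : (p*(2*γ-1))*(1/p) = 2*γ-1 := by field_simp
    have h1 : a ^ (2*γ-1) = (a ^ (p*(2*γ-1))) ^ (1/p) := by
      rw [← Real.rpow_mul ha, hexp]
    rw [h1, Real.rpow_neg hB.le, Real.div_rpow hA hB.le]
    ring
  -- key monotonicity of s ↦ f s ^ (2γ-1) * f' s on [0,∞)
  have key : ∀ s t : ℝ, 0 ≤ s → s ≤ t →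
      f s ^ (2*γ-1) * f' s ≤ f t ^ (2*γ-1) * f' t := by
    intro s t hs hst
    have ht : 0 ≤ t := hs.trans hst
    have has : 0 ≤ f s := hfnn s hs
    have hat : 0 ≤ f t := hfnn t ht
    have hab : f s ≤ f t := hmono.monotone hst
    rw [hf' s, hf' t, abs_of_nonneg has, abs_of_nonneg hat, form _ has, form _ hat]
    set A := f s ^ (p*(2*γ-1)) with hAdef
    set B := f t ^ (p*(2*γ-1)) with hBdef
    have hA : (0:ℝ) ≤ A := Real.rpow_nonneg has _
    have hB : (0:ℝ) ≤ B := Real.rpow_nonneg hat _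
    have hAB : A ≤ B := Real.rpow_le_rpow has hab hq0
    have hA1 : (0:ℝ) < 1 + c * A := by nlinarith
    have hB1 : (0:ℝ) < 1 + c * B := by nlinarith
    have hdiv : A / (1 + c * A) ≤ B / (1 + c * B) := by
      rw [div_le_div_iff₀ hA1 hB1]; nlinarith
    exact Real.rpow_le_rpow (by positivity) hdiv (by positivity)
  -- the function v = f ^ (2γ) and its derivative
  have hvderiv : ∀ t : ℝ, HasDerivAt (fun s => f s ^ (2*γ))
      (f' t * (2*γ) * f t ^ (2*γ - 1)) t := by
    intro t
    exact (hderiv t).rpow_const (Or.inr (by linarith))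
  intro t ht
  rcases ht.lt_or_eq with htpos | hteq
  swap
  · simp [← hteq, hf0]
  have hft : 0 < f t := by simpa [hf0] using hmono htpos
  constructor
  · -- lower bound: f t ≤ 2γ t f' t via MVT for v
    obtain ⟨x, hx, hslope⟩ := exists_hasDerivAt_eq_slope (fun s => f s ^ (2*γ))
      (fun s => f' s * (2*γ) * f s ^ (2*γ - 1)) htpos
      (fun s _ => (hvderiv s).continuousAt.continuousWithinAt)
      (fun s _ => hvderiv s)
    have hx0 : 0 ≤ x := hx.1.le
    have hxt : x ≤ t := hx.2.le
    have hv0 : f 0 ^ (2*γ) = 0 := by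
      rw [hf0]; exact Real.zero_rpow (by linarith)
    have htne : t ≠ 0 := htpos.ne'
    have hvt : f t ^ (2*γ) = t * (f' x * (2*γ) * f x ^ (2*γ - 1)) := by
      rw [hslope, hv0]
      field_simp
      ring
    have hle : f t ^ (2*γ) ≤ t * (f' t * (2*γ) * f t ^ (2*γ - 1)) := by
      rw [hvt]
      have h := mul_le_mul_of_nonneg_left (key x t hx0 hxt)
        (by positivity : (0:ℝ) ≤ 2*γ*t)
      nlinarith [h]
    have hsplit : f t ^ (2*γ) = f t * f t ^ (2*γ - 1) := by
      have := Real.rpow_add_one hft.ne' (2*γ-1)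
      rw [show (2*γ-1)+1 = 2*γ by ring] at this
      rw [this]; ring
    rw [hsplit] at hle
    have hX : (0:ℝ) < f t ^ (2*γ - 1) := Real.rpow_pos_of_pos hft _
    have : f t ≤ 2*γ*t*(f' t) := by
      have h2 : f t * f t ^ (2*γ-1) ≤ (2*γ*t*f' t) * f t ^ (2*γ-1) := by nlinarith
      exact le_of_mul_le_mul_right (by linarith [h2]) hX
    linarith
  · -- upper bound: t * f' t ≤ f t via MVT
    obtain ⟨x, hx, hslope⟩ := exists_hasDerivAt_eq_slope f f' htpos
      (fun s _ => (hderiv s).continuousAt.continuousWithinAt)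
      (fun s _ => hderiv s)
    have hfc : f t = t * f' x := by
      rw [hslope, hf0]; field_simp; ring
    have h1 := hanti x t hx.1.le hx.2.le
    have ht0 : (0:ℝ) ≤ t := htpos.le
    have h2 := mul_le_mul_of_nonneg_left
      (mul_le_mul_of_nonneg_left h1 ht0) hγ0.le
    nlinarith [h2, hfc]
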